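/- Let t₀ < t₁, let f, g : ℝ×ℝ×ℝ → ℝ be continuous, h : ℝ → ℝ continuous on [t₀,t₁], φ : ℝ×ℝ → ℝ continuously differentiable with φ(t₀,0) = φ(t₁,0) = 0, and let η ≥ 0. Suppose (i) f(x,y,z) − η·g(x,y,z) + Dφ(x,y,z) ≥ h(x) for every x ∈ [t₀,t₁] and all y, z ∈ ℝ, and (ii) ∫_{t₀}^{t₁} h(x) dx ≥ 0. Then every continuously differentiable u : ℝ → ℝ with u(t₀) = u(t₁) = 0 that satisfies the integral constraint ∫_{t₀}^{t₁} g(x, u(x), u'(x)) dx ≥ 0 also satisfies ∫_{t₀}^{t₁} f(x, u(x), u'(x)) dx ≥ 0. -/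

import Mathlib

open Real MeasureTheory Set

theorem stmt_2
    (t₀ t₁ : ℝ) (ht : t₀ < t₁)
    (f g : ℝ → ℝ → ℝ → ℝ)
    (hf : Continuous fun p : ℝ × ℝ × ℝ => f p.1 p.2.1 p.2.2)
    (hg : Continuous fun p : ℝ × ℝ × ℝ => g p.1 p.2.1 p.2.2)
    (h : ℝ → ℝ) (hh : ContinuousOn h (Icc t₀ t₁))
    (φ : ℝ → ℝ → ℝ) (hφ : ContDiff ℝ 1 fun p : ℝ × ℝ => φ p.1 p.2)
    (hφ0 : φ t₀ 0 = 0) (hφ1 : φ t₁ 0 = 0)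
    (η : ℝ) (hη : 0 ≤ η)
    (hpoint : ∀ x ∈ Icc t₀ t₁, ∀ y z : ℝ,
      f x y z - η * g x y z + deriv (fun s => φ s y) x + deriv (fun t => φ x t) y * z ≥ h x)
    (hint : (0:ℝ) ≤ ∫ x in t₀..t₁, h x)
    (u : ℝ → ℝ) (hu : ContDiff ℝ 1 u) (hu0 : u t₀ = 0) (hu1 : u t₁ = 0)
    (hcon : (0:ℝ) ≤ ∫ x in t₀..t₁, g x (u x) (deriv u x)) :
    (0:ℝ) ≤ ∫ x in t₀..t₁, f x (u x) (deriv u x) := by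
  set Φ : ℝ × ℝ → ℝ := fun p => φ p.1 p.2 with hΦdef
  have hu' : Continuous (deriv u) := hu.continuous_deriv le_rfl
  have hucont : Continuous u := hu.continuous
  have hcurve : Continuous fun x : ℝ => ((x, u x, deriv u x) : ℝ × ℝ × ℝ) :=
    continuous_id.prodMk (hucont.prodMk hu')
  have hF : Continuous fun x => f x (u x) (deriv u x) := hf.comp hcurve
  have hG : Continuous fun x => g x (u x) (deriv u x) := hg.comp hcurve
  have hfd : Continuous fun p : ℝ × ℝ => fderiv ℝ Φ p := hφ.continuous_fderiv one_ne_zero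
  set P : ℝ → ℝ := fun x => fderiv ℝ Φ (x, u x) (1, deriv u x) with hPdef
  have hPcont : Continuous P := by
    apply Continuous.clm_apply
    · exact hfd.comp (continuous_id.prodMk hucont)
    · exact continuous_const.prodMk hu'
  have hD : ∀ p : ℝ × ℝ, HasFDerivAt Φ (fderiv ℝ Φ p) p := fun p =>
    (hφ.differentiable one_ne_zero p).hasFDerivAt
  have hw : ∀ x : ℝ, HasDerivAt (fun x => Φ (x, u x)) (P x) x := by
    intro x
    have h2 : HasDerivAt (fun x => ((x, u x) : ℝ × ℝ)) (1, deriv u x) x :=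
      HasDerivAt.prodMk (hasDerivAt_id x) (hu.differentiable one_ne_zero x).hasDerivAt
    exact (hD (x, u x)).comp_hasDerivAt x h2
  have hintP : (∫ x in t₀..t₁, P x) = 0 := by
    rw [intervalIntegral.integral_eq_sub_of_hasDerivAt
      (fun x _ => hw x) (hPcont.intervalIntegrable t₀ t₁)]
    simp only [hΦdef, hu0, hu1, hφ0, hφ1, sub_zero]
  have hPpart : ∀ x : ℝ,
      P x = deriv (fun s => φ s (u x)) x + deriv (fun t => φ x t) (u x) * deriv u x := by
    intro x
    have h1 : HasDerivAt (fun s => φ s (u x)) (fderiv ℝ Φ (x, u x) (1, 0)) x := by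
      have := (hD (x, u x)).comp_hasDerivAt x
        (HasDerivAt.prodMk (hasDerivAt_id x) (hasDerivAt_const x (u x)))
      exact this
    have h2 : HasDerivAt (fun t => φ x t) (fderiv ℝ Φ (x, u x) (0, 1)) (u x) := by
      have := (hD (x, u x)).comp_hasDerivAt (u x)
        (HasDerivAt.prodMk (hasDerivAt_const (u x) x) (hasDerivAt_id (u x)))
      exact this
    rw [h1.deriv, h2.deriv]
    have hv : ((1 : ℝ), deriv u x) = (1, 0) + deriv u x • ((0:ℝ), (1:ℝ)) := by
      simp
    show (fderiv ℝ Φ (x, u x)) (1, deriv u x) = _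
    rw [hv, map_add, (fderiv ℝ Φ (x, u x)).map_smul, smul_eq_mul]
    ring
  -- pointwise inequality
  have hle : t₀ ≤ t₁ := ht.le
  have hptw : ∀ x ∈ Icc t₀ t₁,
      h x + η * g x (u x) (deriv u x) - P x ≤ f x (u x) (deriv u x) := by
    intro x hx
    linarith [hpoint x hx (u x) (deriv u x), hPpart x]
  have hhint : IntervalIntegrable h volume t₀ t₁ := by
    apply ContinuousOn.intervalIntegrable
    rwa [uIcc_of_le hle]
  have hGint : IntervalIntegrable (fun x => g x (u x) (deriv u x)) volume t₀ t₁ :=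
    hG.intervalIntegrable t₀ t₁
  have hFint : IntervalIntegrable (fun x => f x (u x) (deriv u x)) volume t₀ t₁ :=
    hF.intervalIntegrable t₀ t₁
  have hPint : IntervalIntegrable P volume t₀ t₁ := hPcont.intervalIntegrable t₀ t₁
  have hRHSint : IntervalIntegrable
      (fun x => h x + η * g x (u x) (deriv u x) - P x) volume t₀ t₁ :=
    (hhint.add (hGint.const_mul η)).sub hPint
  have hmono := intervalIntegral.integral_mono_on hle hRHSint hFint hptw
  have hsplit : (∫ x in t₀..t₁, (h x + η * g x (u x) (deriv u x) - P x)) =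
      (∫ x in t₀..t₁, h x) + η * (∫ x in t₀..t₁, g x (u x) (deriv u x))
        - (∫ x in t₀..t₁, P x) := by
    rw [intervalIntegral.integral_sub (hhint.add (hGint.const_mul η)) hPint,
      intervalIntegral.integral_add hhint (hGint.const_mul η),
      intervalIntegral.integral_const_mul]
  rw [hsplit, hintP, sub_zero] at hmono
  nlinarith [mul_nonneg hη hcon]
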